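/- Let F be an ordered field in which 1 - v² has a square root for every v ∈ F with 0 ≤ v < 1. Then F is a Euclidean field, i.e., every positive element of F has a square root in F. -/

import Mathlib

/-- If in an ordered field `F` the element `1 - v²` has a square root for every `0 ≤ v < 1`,
then `F` is Euclidean: every positive element has a square root. -/
theorem stmt_6 {F : Type*} [Field F] [LinearOrder F] [IsStrictOrderedRing F]
    (h : ∀ v : F, 0 ≤ v → v < 1 → ∃ z : F, z ^ 2 = 1 - v ^ 2) :
    ∀ x : F, 0 < x → ∃ z : F, z ^ 2 = x := by
  intro x hx
  have hx1 : (0:F) < x + 1 := by linarith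
  set v : F := |x - 1| / (x + 1) with hv
  have hv0 : 0 ≤ v := div_nonneg (abs_nonneg _) hx1.le
  have hv1 : v < 1 := by
    rw [hv, div_lt_one hx1, abs_lt]
    constructor <;> linarith
  obtain ⟨z, hz⟩ := h v hv0 hv1
  refine ⟨z * (x + 1) / 2, ?_⟩
  have hsq : v ^ 2 = (x - 1) ^ 2 / (x + 1) ^ 2 := by
    rw [hv, div_pow, sq_abs]
  rw [hsq] at hz
  have h2 : z ^ 2 * (x + 1) ^ 2 = (x + 1) ^ 2 - (x - 1) ^ 2 := by
    field_simp at hz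
    linarith [hz]
  field_simp
  ring_nf
  ring_nf at h2
  nlinarith [h2]
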